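/- Let H be a finite-dimensional complex Hilbert space, n ≥ 1, and let ρ_n, σ_n ∈ D(H^{⊗n}) be two states. Then the local variation distance is bounded by the normalised Wasserstein distance: ‖ρ_n − σ_n‖_{LV} ≤ (2/n)·‖ρ_n − σ_n‖_{W1}. -/

import Mathlib

open scoped BigOperators ComplexOrder
open Filter Matrix

noncomputable section

namespace AlmostIID

/-- The trace norm `‖A‖₁ = Tr √(A†A)` of a square complex matrix. -/
def traceNorm {m : Type*} [Fintype m] [DecidableEq m] (A : Matrix m m ℂ) : ℝ :=
  (((Matrix.posSemidef_conjTranspose_mul_self A).1.eigenvectorUnitary.1 *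
      diagonal (((↑) : ℝ → ℂ) ∘ (√·) ∘ (Matrix.posSemidef_conjTranspose_mul_self A).1.eigenvalues) *
      (star (Matrix.posSemidef_conjTranspose_mul_self A).1.eigenvectorUnitary : Matrix m m ℂ)).trace).re

/-- A density matrix (state): positive semidefinite with unit trace. -/
def IsState {m : Type*} [Fintype m] (M : Matrix m m ℂ) : Prop :=
  M.PosSemidef ∧ M.trace = 1

/-- The marginal (reduced density matrix) of an `n`-partite operator on the
coordinates in `I`, i.e. the partial trace over the complement of `I`. -/
def marginal {κ : Type*} [Fintype κ] {n : ℕ}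
    (M : Matrix (Fin n → κ) (Fin n → κ) ℂ) (I : Finset (Fin n)) :
    Matrix ({i : Fin n // i ∈ I} → κ) ({i : Fin n // i ∈ I} → κ) ℂ :=
  fun a b => ∑ f : {i : Fin n // i ∉ I} → κ,
    M (fun i => if h : i ∈ I then a ⟨i, h⟩ else f ⟨i, h⟩)
      (fun i => if h : i ∈ I then b ⟨i, h⟩ else f ⟨i, h⟩)

/-- The single-site reduced density matrix on the `i`-th tensor factor. -/
def siteMarginal {κ : Type*} [Fintype κ] {n : ℕ}
    (M : Matrix (Fin n → κ) (Fin n → κ) ℂ) (i : Fin n) : Matrix κ κ ℂ :=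
  fun a b => ∑ f : {j : Fin n // j ≠ i} → κ,
    M (fun j => if h : j = i then a else f ⟨j, h⟩)
      (fun j => if h : j = i then b else f ⟨j, h⟩)

/-- The i.i.d. product state `ρ^{⊗ι}` on the tensor factors indexed by `ι`. -/
def iidOn {κ : Type*} (ι : Type*) [Fintype ι] (ρ : Matrix κ κ ℂ) :
    Matrix (ι → κ) (ι → κ) ℂ :=
  fun a b => ∏ i, ρ (a i) (b i)

/-- The product state `φ 0 ⊗ φ 1 ⊗ ⋯`. -/
def prodState {κ : Type*} {ι : Type*} [Fintype ι] (φ : ι → Matrix κ κ ℂ) :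
    Matrix (ι → κ) (ι → κ) ℂ :=
  fun a b => ∏ i, φ i (a i) (b i)

/-- The quantum Wasserstein norm of order 1 of a difference of states:
the minimum of `Σ cᵢ` over decompositions `X = Σ cᵢ (τ⁽ⁱ⁾ − η⁽ⁱ⁾)` with `cᵢ ≥ 0`,
`τ⁽ⁱ⁾, η⁽ⁱ⁾` states with equal partial traces over the `i`-th factor. -/
def W1 {κ : Type*} [Fintype κ] [DecidableEq κ] {n : ℕ}
    (X : Matrix (Fin n → κ) (Fin n → κ) ℂ) : ℝ :=
  sInf { w : ℝ |
    ∃ (c : Fin n → ℝ) (τ η : Fin n → Matrix (Fin n → κ) (Fin n → κ) ℂ),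
      (∀ i, 0 ≤ c i) ∧ (∀ i, IsState (τ i)) ∧ (∀ i, IsState (η i)) ∧
      (∀ i, marginal (τ i) ({i}ᶜ : Finset (Fin n)) = marginal (η i) ({i}ᶜ : Finset (Fin n))) ∧
      X = ∑ i, c i • (τ i - η i) ∧ w = ∑ i, c i }

/-- The local variation norm. -/
def LV {κ : Type*} [Fintype κ] [DecidableEq κ] {n : ℕ}
    (X : Matrix (Fin n → κ) (Fin n → κ) ℂ) : ℝ :=
  (1/2) * ∑ k ∈ Finset.Icc 1 n, ((2:ℝ)^k)⁻¹ *
    (((n.choose k : ℝ))⁻¹ *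
      ∑ I ∈ Finset.powersetCard k (Finset.univ : Finset (Fin n)),
        traceNorm (marginal X I))

/-! ### Auxiliary lemmas -/


lemma sum_rot {α β γ M : Type*} [Fintype α] [Fintype β] [Fintype γ] [AddCommMonoid M]
    (F : α → β → γ → M) :
    ∑ a, ∑ b, ∑ f, F a b f = ∑ f, ∑ a, ∑ b, F a b f := by
  calc ∑ a, ∑ b, ∑ f, F a b f = ∑ a, ∑ f, ∑ b, F a b f :=
        Finset.sum_congr rfl fun a _ => Finset.sum_comm
    _ = ∑ f, ∑ a, ∑ b, F a b f := Finset.sum_comm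

section abstractPT
variable {β γ₁ γ₂ : Type*} [Fintype β] [Fintype γ₁] [Fintype γ₂]
  [DecidableEq γ₁] [DecidableEq γ₂]

/-- abstract partial trace along an identification `β ≃ γ₁ × γ₂`. -/
def ptrace (E : β ≃ γ₁ × γ₂) (M : Matrix β β ℂ) : Matrix γ₁ γ₁ ℂ :=
  fun a b => ∑ f, M (E.symm (a, f)) (E.symm (b, f))

lemma ptrace_trace (E : β ≃ γ₁ × γ₂) (M : Matrix β β ℂ) :
    (ptrace E M).trace = M.trace := by
  simp only [Matrix.trace, Matrix.diag, ptrace]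
  rw [← Equiv.sum_comp E.symm (fun u => M u u)]
  exact (Fintype.sum_prod_type (fun p : γ₁ × γ₂ => M (E.symm p) (E.symm p))).symm

lemma ptrace_posSemidef (E : β ≃ γ₁ × γ₂) {M : Matrix β β ℂ} (hM : M.PosSemidef) :
    (ptrace E M).PosSemidef := by
  refine Matrix.PosSemidef.of_dotProduct_mulVec_nonneg ?_ ?_
  · ext a b
    simp only [conjTranspose_apply, ptrace, star_sum]
    refine Finset.sum_congr rfl fun f _ => ?_
    rw [← Matrix.conjTranspose_apply, hM.1]
  · intro v
    set w : γ₂ → β → ℂ := fun f u => if (E u).2 = f then v (E u).1 else 0 with hw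
    have hRHS : ∀ f, dotProduct (star (w f)) (M *ᵥ (w f))
        = ∑ a, ∑ b, star (v a) * (M (E.symm (a, f)) (E.symm (b, f)) * v b) := by
      intro f
      have hinner : ∀ u : β, (M *ᵥ w f) u = ∑ b, M u (E.symm (b, f)) * v b := by
        intro u
        simp only [Matrix.mulVec, dotProduct]
        rw [← Equiv.sum_comp E.symm (fun u' => M u u' * w f u'), Fintype.sum_prod_type]
        refine Finset.sum_congr rfl fun b _ => ?_
        rw [Finset.sum_eq_single_of_mem f (Finset.mem_univ f)
          (fun g _ hg => by simp [hw, Equiv.apply_symm_apply, hg])]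
        simp [hw]
      simp only [dotProduct, Pi.star_apply]
      rw [← Equiv.sum_comp E.symm (fun u => star (w f u) * (M *ᵥ w f) u),
        Fintype.sum_prod_type]
      refine Finset.sum_congr rfl fun a _ => ?_
      rw [Finset.sum_eq_single_of_mem f (Finset.mem_univ f)
        (fun g _ hg => by simp [hw, Equiv.apply_symm_apply, hg])]
      rw [hinner]; simp [hw, Finset.mul_sum]
    have hsplit : dotProduct (star v) ((ptrace E M) *ᵥ v)
        = ∑ f, dotProduct (star (w f)) (M *ᵥ (w f)) := by
      simp only [hRHS]
      simp only [dotProduct, Matrix.mulVec, ptrace, Pi.star_apply,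
        Finset.mul_sum, Finset.sum_mul]
      exact sum_rot _
    rw [hsplit]
    exact Finset.sum_nonneg fun f _ => hM.dotProduct_mulVec_nonneg (w f)

end abstractPT
/-! depol: Hermitian/PSD/trace -/
section Aux2
set_option linter.unusedSectionVars false
variable {β γ₁ γ₂ : Type*} [Fintype β] [Fintype γ₁] [Fintype γ₂]
  [DecidableEq γ₁] [DecidableEq γ₂]

def depol (E : β ≃ γ₁ × γ₂) (c : ℝ) (M : Matrix β β ℂ) : Matrix β β ℂ :=
  fun g h => (if (E g).1 = (E h).1 then (c : ℂ) else 0) *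
    ∑ x : γ₁, M (E.symm (x, (E g).2)) (E.symm (x, (E h).2))

lemma depol_apply_eq (E : β ≃ γ₁ × γ₂) (c : ℝ) (M : Matrix β β ℂ) (g h : β) :
    depol E c M g h = (if (E g).1 = (E h).1 then (c : ℂ) else 0) *
      ptrace (E.trans (Equiv.prodComm γ₁ γ₂)) M (E g).2 (E h).2 := by
  simp only [depol, ptrace, Equiv.trans, Equiv.prodComm, Equiv.symm, Equiv.coe_fn_mk,
    Function.comp_apply, Prod.swap_prod_mk]

lemma depol_trace (E : β ≃ γ₁ × γ₂) (c : ℝ) (M : Matrix β β ℂ) :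
    (depol E c M).trace = (c : ℂ) * (Fintype.card γ₁) * M.trace := by
  set N' := ptrace (E.trans (Equiv.prodComm γ₁ γ₂)) M with hN'
  have h1 : (depol E c M).trace = ∑ u, (c:ℂ) * N' (E u).2 (E u).2 := by
    simp only [Matrix.trace, Matrix.diag, depol_apply_eq, eq_self_iff_true, if_true]
    rfl
  rw [h1, ← Equiv.sum_comp E.symm (fun u => (c:ℂ) * N' (E u).2 (E u).2),
    Fintype.sum_prod_type]
  simp only [Equiv.apply_symm_apply]
  rw [Finset.sum_const, Finset.card_univ, nsmul_eq_mul]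
  have htr : ∑ x : γ₂, N' x x = M.trace := by
    rw [← ptrace_trace (E.trans (Equiv.prodComm γ₁ γ₂)) M, ← hN']; rfl
  rw [← Finset.mul_sum, ← htr]
  ring

lemma depol_posSemidef (E : β ≃ γ₁ × γ₂) {c : ℝ} (hc : 0 ≤ c) {M : Matrix β β ℂ}
    (hM : M.PosSemidef) : (depol E c M).PosSemidef := by
  set N' := ptrace (E.trans (Equiv.prodComm γ₁ γ₂)) M with hN'
  have hN'psd : N'.PosSemidef := ptrace_posSemidef _ hM
  refine Matrix.PosSemidef.of_dotProduct_mulVec_nonneg ?_ ?_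
  · ext g h
    rw [conjTranspose_apply, depol_apply_eq, depol_apply_eq, star_mul']
    congr 1
    · rcases eq_or_ne (E g).1 (E h).1 with he | he
      · simp [he, Complex.conj_ofReal]
      · simp [he, Ne.symm he]
    · rw [← Matrix.conjTranspose_apply, hN'psd.1]
  · intro v
    have key : dotProduct (star v) ((depol E c M) *ᵥ v)
        = ∑ p : γ₁, (c:ℂ) * dotProduct (star (fun q => v (E.symm (p, q))))
            (N' *ᵥ (fun q => v (E.symm (p, q)))) := by
      simp only [dotProduct, Pi.star_apply, Matrix.mulVec]
      rw [← Equiv.sum_comp E.symm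
        (fun u => star (v u) * ∑ u', depol E c M u u' * v u'), Fintype.sum_prod_type]
      refine Finset.sum_congr rfl fun p _ => ?_
      rw [Finset.mul_sum]
      refine Finset.sum_congr rfl fun q _ => ?_
      have hrow : ∑ u', depol E c M (E.symm (p, q)) u' * v u'
          = (c:ℂ) * ∑ q', N' q q' * v (E.symm (p, q')) := by
        rw [← Equiv.sum_comp E.symm
          (fun u' => depol E c M (E.symm (p, q)) u' * v u'), Fintype.sum_prod_type]
        rw [Finset.sum_eq_single_of_mem p (Finset.mem_univ p) (fun p' _ hp' => ?_)]
        · simp only [depol_apply_eq, Equiv.apply_symm_apply, eq_self_iff_true, if_true, Finset.mul_sum]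
          refine Finset.sum_congr rfl fun q' _ => by ring
        · refine Finset.sum_eq_zero fun q' _ => ?_
          simp [depol_apply_eq, Equiv.apply_symm_apply, Ne.symm hp']
      rw [hrow]
      ring
    rw [key]
    refine Finset.sum_nonneg fun p _ => ?_
    refine mul_nonneg ?_ (hN'psd.dotProduct_mulVec_nonneg _)
    exact_mod_cast Complex.zero_le_real.mpr hc

end Aux2


section Aux3
set_option linter.unusedSectionVars false
variable {κ : Type*} [Fintype κ] [DecidableEq κ] {n : ℕ}

def margEquiv (I : Finset (Fin n)) :
    (Fin n → κ) ≃ ({i : Fin n // i ∈ I} → κ) × ({i : Fin n // i ∉ I} → κ) :=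
  Equiv.piEquivPiSubtypeProd (· ∈ I) (fun _ => κ)

lemma marginal_eq_ptrace (M : Matrix (Fin n → κ) (Fin n → κ) ℂ) (I : Finset (Fin n)) :
    marginal M I = ptrace (margEquiv I) M := by
  ext a b
  simp only [marginal, ptrace, margEquiv]
  refine Finset.sum_congr rfl fun f _ => ?_
  congr 1 <;>
  · funext i
    simp [Equiv.piEquivPiSubtypeProd]

lemma marginal_posSemidef {M : Matrix (Fin n → κ) (Fin n → κ) ℂ} (hM : M.PosSemidef)
    (I : Finset (Fin n)) : (marginal M I).PosSemidef := by
  rw [marginal_eq_ptrace]; exact ptrace_posSemidef _ hM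

lemma marginal_trace (M : Matrix (Fin n → κ) (Fin n → κ) ℂ) (I : Finset (Fin n)) :
    (marginal M I).trace = M.trace := by
  rw [marginal_eq_ptrace]; exact ptrace_trace _ M

lemma marginal_add (M N : Matrix (Fin n → κ) (Fin n → κ) ℂ) (I : Finset (Fin n)) :
    marginal (M + N) I = marginal M I + marginal N I := by
  ext a b
  simp [marginal, Finset.sum_add_distrib]

lemma marginal_sub (M N : Matrix (Fin n → κ) (Fin n → κ) ℂ) (I : Finset (Fin n)) :
    marginal (M - N) I = marginal M I - marginal N I := by
  ext a b
  simp [marginal, Finset.sum_sub_distrib]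

lemma marginal_smul (r : ℝ) (M : Matrix (Fin n → κ) (Fin n → κ) ℂ) (I : Finset (Fin n)) :
    marginal (r • M) I = r • marginal M I := by
  ext a b
  simp [marginal, Finset.smul_sum]

lemma marginal_sum {ι : Type*} (s : Finset ι) (F : ι → Matrix (Fin n → κ) (Fin n → κ) ℂ)
    (I : Finset (Fin n)) :
    marginal (∑ i ∈ s, F i) I = ∑ i ∈ s, marginal (F i) I := by
  ext a b
  simp only [marginal, Matrix.sum_apply]
  exact Finset.sum_comm

/-- If two operators have the same marginal on `J`, they have the same marginal on
any `I ⊆ J`. -/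
lemma marginal_restrict {M N : Matrix (Fin n → κ) (Fin n → κ) ℂ} {I J : Finset (Fin n)}
    (hIJ : I ⊆ J) (h : marginal M J = marginal N J) : marginal M I = marginal N I := by
  have hform : ∀ (M : Matrix (Fin n → κ) (Fin n → κ) ℂ)
      (a b : {i : Fin n // i ∈ I} → κ), marginal M I a b =
      ∑ g : {j : Fin n // j ∈ J \ I} → κ,
        marginal M J
          (fun j => if h' : j.1 ∈ I then a ⟨j.1, h'⟩
            else g ⟨j.1, Finset.mem_sdiff.2 ⟨j.2, h'⟩⟩)
          (fun j => if h' : j.1 ∈ I then b ⟨j.1, h'⟩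
            else g ⟨j.1, Finset.mem_sdiff.2 ⟨j.2, h'⟩⟩) := by
    intro M a b
    set e : (({j : Fin n // j ∈ J \ I} → κ) × ({j : Fin n // j ∉ J} → κ))
        ≃ ({j : Fin n // j ∉ I} → κ) :=
      { toFun := fun p x => if h : x.1 ∈ J then p.1 ⟨x.1, Finset.mem_sdiff.mpr ⟨h, x.2⟩⟩
          else p.2 ⟨x.1, h⟩
        invFun := fun f => (fun y => f ⟨y.1, (Finset.mem_sdiff.mp y.2).2⟩,
          fun y => f ⟨y.1, fun hI => y.2 (hIJ hI)⟩)
        left_inv := by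
          intro p
          refine Prod.ext (funext fun y => ?_) (funext fun y => ?_)
          · have hy := (Finset.mem_sdiff.mp y.2).1
            simp only [hy, dif_pos]
          · have hy : y.1 ∉ J := y.2
            simp only [hy, dif_neg, not_false_iff]
        right_inv := by
          intro f
          funext x
          by_cases hx : x.1 ∈ J
          · simp only [hx, dif_pos]
          · simp only [hx, dif_neg, not_false_iff] } with he
    rw [marginal, ← Equiv.sum_comp e
      (fun f => M (fun i => if h : i ∈ I then a ⟨i, h⟩ else f ⟨i, h⟩)
        (fun i => if h : i ∈ I then b ⟨i, h⟩ else f ⟨i, h⟩)), Fintype.sum_prod_type]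
    refine Finset.sum_congr rfl fun g _ => ?_
    rw [marginal]
    refine Finset.sum_congr rfl fun f' _ => ?_
    congr 1 <;>
    · funext i
      by_cases hI : i ∈ I
      · have hJ : i ∈ J := hIJ hI
        simp only [hI, hJ, dif_pos]
      · by_cases hJ : i ∈ J
        · simp only [hI, hJ, dif_pos, dif_neg, not_false_iff, he, Equiv.coe_fn_mk]
        · simp only [hI, hJ, dif_neg, not_false_iff, he, Equiv.coe_fn_mk]
  ext a b
  rw [hform M, hform N, h]

end Aux3

section Aux4
set_option linter.unusedSectionVars false
variable {κ : Type*} [Fintype κ] [DecidableEq κ] {n : ℕ}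

def depSet (n k : ℕ) : Finset (Fin n) := Finset.univ.filter (fun j => (j:ℕ) < k)

@[simp] lemma mem_depSet {k : ℕ} {j : Fin n} : j ∈ depSet n k ↔ (j:ℕ) < k := by
  simp [depSet]

def depEquiv (κ : Type*) (n k : ℕ) : (Fin n → κ) ≃
    ({j : Fin n // j ∈ depSet n k} → κ) × ({j : Fin n // j ∉ depSet n k} → κ) :=
  Equiv.piEquivPiSubtypeProd (· ∈ depSet n k) (fun _ => κ)

/-- depolarize the sites `0, …, k-1`. -/
def dep (k : ℕ) (M : Matrix (Fin n → κ) (Fin n → κ) ℂ) :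
    Matrix (Fin n → κ) (Fin n → κ) ℂ :=
  depol (depEquiv κ n k) (((Fintype.card κ : ℝ))⁻¹ ^ (depSet n k).card) M

lemma dep_posSemidef (k : ℕ) {M : Matrix (Fin n → κ) (Fin n → κ) ℂ} (hM : M.PosSemidef) :
    (dep k M).PosSemidef :=
  depol_posSemidef _ (by positivity) hM

lemma dep_trace [Nonempty κ] (k : ℕ) (M : Matrix (Fin n → κ) (Fin n → κ) ℂ) :
    (dep k M).trace = M.trace := by
  rw [dep, depol_trace]
  have h1 : (Fintype.card ({j : Fin n // j ∈ depSet n k} → κ) : ℂ)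
      = ((Fintype.card κ : ℂ)) ^ (depSet n k).card := by
    rw [Fintype.card_fun, Fintype.card_coe]
    push_cast
    ring
  rw [h1]
  have h0 : (Fintype.card κ : ℝ) ≠ 0 := by
    have := Fintype.card_pos (α := κ); positivity
  have : ((((Fintype.card κ : ℝ))⁻¹ ^ (depSet n k).card : ℝ) : ℂ)
      * ((Fintype.card κ : ℂ)) ^ (depSet n k).card = 1 := by
    push_cast
    rw [← mul_pow, inv_mul_cancel₀ (by exact_mod_cast h0), one_pow]
  rw [this, one_mul]

lemma dep_zero (M : Matrix (Fin n → κ) (Fin n → κ) ℂ) : dep 0 M = M := by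
  haveI : IsEmpty {j : Fin n // j ∈ depSet n 0} :=
    ⟨fun j => Nat.not_lt_zero _ (mem_depSet.mp j.2)⟩
  have hempty : depSet n 0 = ∅ := by ext j; simp
  ext g h
  rw [dep, depol]
  have h1 : (depEquiv κ n 0 g).1 = (depEquiv κ n 0 h).1 := Subsingleton.elim _ _
  rw [if_pos h1, show (depSet n 0).card = 0 from by rw [hempty]; rfl, pow_zero]
  have h3 : ∀ (g' : Fin n → κ) (x : {j : Fin n // j ∈ depSet n 0} → κ),
      (depEquiv κ n 0).symm (x, (depEquiv κ n 0 g').2) = g' := by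
    intro g' x
    funext j
    have hj : j ∉ depSet n 0 := by simp
    simp [depEquiv, Equiv.piEquivPiSubtypeProd, hj]
  simp only [h3]
  rw [Finset.sum_const, Finset.card_univ]
  have hcard1 : Fintype.card ({j : Fin n // j ∈ depSet n 0} → κ) = 1 := by
    rw [Fintype.card_fun, Fintype.card_coe, show (depSet n 0).card = 0 from by rw [hempty]; rfl]
    simp
  rw [hcard1, one_smul]
  push_cast
  ring

lemma dep_full {k : ℕ} (hk : n ≤ k) {M N : Matrix (Fin n → κ) (Fin n → κ) ℂ}
    (hMN : M.trace = N.trace) : dep k M = dep k N := by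
  have hmem : ∀ j : Fin n, j ∈ depSet n k := fun j => by
    simp only [mem_depSet]; exact lt_of_lt_of_le j.isLt hk
  set e2 : ({j : Fin n // j ∈ depSet n k} → κ) ≃ (Fin n → κ) :=
    { toFun := fun x j => x ⟨j, hmem j⟩
      invFun := fun g j => g j.1
      left_inv := fun x => funext fun j => by cases j; rfl
      right_inv := fun g => funext fun j => rfl } with he2
  have harg : ∀ (q : {j : Fin n // j ∉ depSet n k} → κ)
      (x : {j : Fin n // j ∈ depSet n k} → κ),
      (depEquiv κ n k).symm (x, q) = e2 x := by
    intro q x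
    funext j
    have hjk : (j:ℕ) < k := lt_of_lt_of_le j.isLt hk
    simp [depEquiv, Equiv.piEquivPiSubtypeProd, hjk, he2]
  have hsum : ∀ (L : Matrix (Fin n → κ) (Fin n → κ) ℂ) (q q' : _),
      ∑ x : {j : Fin n // j ∈ depSet n k} → κ,
        L ((depEquiv κ n k).symm (x, q)) ((depEquiv κ n k).symm (x, q')) = L.trace := by
    intro L q q'
    simp only [harg]
    rw [Equiv.sum_comp e2 (fun g => L g g)]
    rfl
  ext g h
  rw [dep, depol, dep, depol, hsum, hsum, hMN]

end Aux4

section Aux5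
set_option linter.unusedSectionVars false
variable {κ : Type*} [Fintype κ] [DecidableEq κ] {n : ℕ}

lemma dep_marginal_succ [Nonempty κ] (i : Fin n) (M : Matrix (Fin n → κ) (Fin n → κ) ℂ) :
    marginal (dep (i.val+1) M) ({i}ᶜ : Finset (Fin n))
      = marginal (dep i.val M) ({i}ᶜ : Finset (Fin n)) := by
  classical
  have hiS1 : i ∈ depSet n (i.val+1) := by simp
  have hiS0 : i ∉ depSet n i.val := by simp
  have hS01 : depSet n i.val ⊆ depSet n (i.val+1) := by
    intro j hj; simp only [mem_depSet] at *; omega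
  have hS1insert : depSet n (i.val+1) = insert i (depSet n i.val) := by
    ext j
    simp only [mem_depSet, Finset.mem_insert, Fin.ext_iff]
    omega
  have hcard : (depSet n (i.val+1)).card = (depSet n i.val).card + 1 := by
    rw [hS1insert, Finset.card_insert_of_notMem hiS0]
  haveI huniq : Unique {j : Fin n // j ∉ ({i}ᶜ : Finset (Fin n))} :=
    { default := ⟨i, by simp⟩
      uniq := fun x => Subtype.ext (by
        have hx := x.2
        simp only [Finset.mem_compl, Finset.mem_singleton, not_not] at hx
        exact hx) }
  ext a b
  set gg : ({j : Fin n // j ∈ ({i}ᶜ : Finset (Fin n))} → κ) → κ → (Fin n → κ) :=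
    fun aa x j => if h : j ∈ ({i}ᶜ : Finset (Fin n)) then aa ⟨j, h⟩ else x with hgg
  have hggi : ∀ aa x, gg aa x i = x := by
    intro aa x; simp [hgg]
  have hggne : ∀ aa x x' (j : Fin n), j ≠ i → gg aa x j = gg aa x' j := by
    intro aa x x' j hj
    simp [hgg, Finset.mem_compl, Finset.mem_singleton, hj]
  have hsum : ∀ N : Matrix (Fin n → κ) (Fin n → κ) ℂ,
      marginal N ({i}ᶜ : Finset (Fin n)) a b = ∑ x : κ, N (gg a x) (gg b x) := by
    intro N
    refine Fintype.sum_equiv (Equiv.funUnique {j : Fin n // j ∉ ({i}ᶜ : Finset (Fin n))} κ)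
      _ _ (fun fn => ?_)
    congr 1 <;>
    · funext j
      by_cases hj : j ∈ ({i}ᶜ : Finset (Fin n))
      · have hne : j ≠ i := by simpa using hj
        simp [hgg, hj, hne]
      · have hdef : (⟨j, hj⟩ : {j : Fin n // j ∉ ({i}ᶜ : Finset (Fin n))}) = default :=
          Subsingleton.elim _ _
        simp only [hj, dif_neg, not_false_iff, hgg]
        rw [hdef]
        rfl
  rw [hsum, hsum]
  -- notation
  set E1 := depEquiv κ n (i.val+1) with hE1
  set E0 := depEquiv κ n i.val with hE0
  have hE1app : ∀ (g : Fin n → κ) (j : {j : Fin n // j ∈ depSet n (i.val+1)}),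
      (E1 g).1 j = g j.1 := by intro g j; simp [hE1, depEquiv, Equiv.piEquivPiSubtypeProd]
  have hE0app : ∀ (g : Fin n → κ) (j : {j : Fin n // j ∈ depSet n i.val}),
      (E0 g).1 j = g j.1 := by intro g j; simp [hE0, depEquiv, Equiv.piEquivPiSubtypeProd]
  have hE1app2 : ∀ (g : Fin n → κ) (j : {j : Fin n // j ∉ depSet n (i.val+1)}),
      (E1 g).2 j = g j.1 := by intro g j; simp [hE1, depEquiv, Equiv.piEquivPiSubtypeProd]
  have hE0app2 : ∀ (g : Fin n → κ) (j : {j : Fin n // j ∉ depSet n i.val}),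
      (E0 g).2 j = g j.1 := by intro g j; simp [hE0, depEquiv, Equiv.piEquivPiSubtypeProd]
  have hE1symm : ∀ (y : {j : Fin n // j ∈ depSet n (i.val+1)} → κ)
      (q : {j : Fin n // j ∉ depSet n (i.val+1)} → κ) (j : Fin n),
      E1.symm (y, q) j = if h : j ∈ depSet n (i.val+1) then y ⟨j, h⟩ else q ⟨j, h⟩ := by
    intro y q j; simp [hE1, depEquiv, Equiv.piEquivPiSubtypeProd]
  have hE0symm : ∀ (y : {j : Fin n // j ∈ depSet n i.val} → κ)
      (q : {j : Fin n // j ∉ depSet n i.val} → κ) (j : Fin n),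
      E0.symm (y, q) j = if h : j ∈ depSet n i.val then y ⟨j, h⟩ else q ⟨j, h⟩ := by
    intro y q j; simp [hE0, depEquiv, Equiv.piEquivPiSubtypeProd]
  -- the coefficient and trace-sum functions of the smaller depolarization
  set C0 : ℂ := (((Fintype.card κ : ℝ)⁻¹ ^ (depSet n i.val).card : ℝ) : ℂ) with hC0
  set c0 : ℂ := (((Fintype.card κ : ℝ)⁻¹ : ℝ) : ℂ) with hc0
  set P : κ → ℂ := fun x => if (E0 (gg a x)).1 = (E0 (gg b x)).1 then C0 else 0 with hP
  set T0 : κ → ℂ := fun x => ∑ y : {j : Fin n // j ∈ depSet n i.val} → κ,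
    M (E0.symm (y, (E0 (gg a x)).2)) (E0.symm (y, (E0 (gg b x)).2)) with hT0
  have hRHSx : ∀ x, dep i.val M (gg a x) (gg b x) = P x * T0 x := fun x => rfl
  have hcond : ∀ x, ((E1 (gg a x)).1 = (E1 (gg b x)).1)
      ↔ ((E0 (gg a x)).1 = (E0 (gg b x)).1) := by
    intro x
    constructor
    · intro h
      funext j
      rw [hE0app, hE0app]
      have := congrFun h ⟨j.1, hS01 j.2⟩
      rw [hE1app, hE1app] at this
      exact this
    · intro h
      funext j
      rw [hE1app, hE1app]
      by_cases hj : j.1 = i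
      · rw [hj, hggi, hggi]
      · have hj0 : j.1 ∈ depSet n i.val := by
          have := j.2
          simp only [mem_depSet] at this ⊢
          have : (j.1 : ℕ) ≠ (i : ℕ) := fun hc => hj (Fin.ext hc)
          omega
        have := congrFun h ⟨j.1, hj0⟩
        rw [hE0app, hE0app] at this
        exact this
  have hLHSx : ∀ x, dep (i.val+1) M (gg a x) (gg b x) = c0 * P x * (∑ w : κ, T0 w) := by
    intro x
    rw [show dep (i.val+1) M (gg a x) (gg b x)
        = (if (E1 (gg a x)).1 = (E1 (gg b x)).1
            then (((Fintype.card κ : ℝ)⁻¹ ^ (depSet n (i.val+1)).card : ℝ) : ℂ) else 0) *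
          ∑ y : {j : Fin n // j ∈ depSet n (i.val+1)} → κ,
            M (E1.symm (y, (E1 (gg a x)).2)) (E1.symm (y, (E1 (gg b x)).2)) from rfl]
    have hcoeff : (if (E1 (gg a x)).1 = (E1 (gg b x)).1
          then (((Fintype.card κ : ℝ)⁻¹ ^ (depSet n (i.val+1)).card : ℝ) : ℂ) else 0)
        = c0 * P x := by
      by_cases h : (E0 (gg a x)).1 = (E0 (gg b x)).1
      · rw [if_pos ((hcond x).mpr h), hP]
        simp only [h, if_true, eq_self_iff_true]
        rw [hcard, pow_succ, hC0, hc0]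
        push_cast
        ring
      · rw [if_neg (fun hc => h ((hcond x).mp hc)), hP]
        simp only [h, if_false]
        ring
    rw [hcoeff]
    congr 1
    -- the sum over the big block splits as a sum over the site i and the small block
    set e1 : κ × ({j : Fin n // j ∈ depSet n i.val} → κ)
        ≃ ({j : Fin n // j ∈ depSet n (i.val+1)} → κ) :=
      { toFun := fun p j => if h : j.1 ∈ depSet n i.val then p.2 ⟨j.1, h⟩ else p.1
        invFun := fun z => (z ⟨i, hiS1⟩, fun j => z ⟨j.1, hS01 j.2⟩)
        left_inv := by
          intro p
          refine Prod.ext ?_ (funext fun j => ?_)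
          · simp only [hiS0, dif_neg, not_false_iff]
          · simp only [j.2, dif_pos]
        right_inv := by
          intro z
          funext j
          by_cases hj : j.1 ∈ depSet n i.val
          · simp only [hj, dif_pos]
          · have h1 := j.2
            simp only [mem_depSet] at h1 hj
            have hji : j = ⟨i, hiS1⟩ := Subtype.ext (Fin.ext (show ((j.1 : Fin n) : ℕ) = (i : ℕ) by omega))
            rw [hji]
            simp [hiS0] } with he1
    rw [← Equiv.sum_comp e1 (fun y => M (E1.symm (y, (E1 (gg a x)).2))
      (E1.symm (y, (E1 (gg b x)).2))), Fintype.sum_prod_type]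
    refine Finset.sum_congr rfl fun w _ => Finset.sum_congr rfl fun y _ => ?_
    congr 1 <;>
    · funext j
      rw [hE1symm]
      by_cases hj0 : j ∈ depSet n i.val
      · have hj1 : j ∈ depSet n (i.val+1) := hS01 hj0
        rw [dif_pos hj1, hE0symm, dif_pos hj0]
        simp only [he1, Equiv.coe_fn_mk, hj0, dif_pos]
      · by_cases hj1 : j ∈ depSet n (i.val+1)
        · have hji : j = i := by
            simp only [mem_depSet] at hj0 hj1
            exact Fin.ext (by omega)
          rw [dif_pos hj1, hE0symm, dif_neg hj0, hE0app2]
          simp only [he1, Equiv.coe_fn_mk, hj0, dif_neg, not_false_iff]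
          rw [hji, hggi]
        · have hji : j ≠ i := fun hc => hj1 (by rw [hc]; exact hiS1)
          rw [dif_neg hj1, hE1app2, hE0symm, dif_neg hj0, hE0app2]
          exact hggne _ x w j hji
  have hPind : ∀ x w : κ, P x = P w := by
    intro x w
    have h1 : ∀ aa, (E0 (gg aa x)).1 = (E0 (gg aa w)).1 := by
      intro aa
      funext j
      rw [hE0app, hE0app]
      refine hggne aa x w j.1 (fun hc => absurd j.2 (by rw [hc]; exact hiS0))
    rw [hP]
    simp only [h1 a, h1 b]
  have hcardinv : (Fintype.card κ : ℂ) * c0 = 1 := by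
    rw [hc0]
    have h0 : (Fintype.card κ : ℝ) ≠ 0 := by
      have := Fintype.card_pos (α := κ); positivity
    push_cast
    rw [mul_inv_cancel₀ (by exact_mod_cast h0)]
  calc ∑ x : κ, dep (i.val+1) M (gg a x) (gg b x)
      = ∑ x : κ, ∑ w : κ, c0 * P w * T0 w := by
        refine Finset.sum_congr rfl fun x _ => ?_
        rw [hLHSx x, Finset.mul_sum]
        refine Finset.sum_congr rfl fun w _ => ?_
        rw [hPind x w]
    _ = (Fintype.card κ : ℂ) * ∑ w : κ, c0 * P w * T0 w := by
        rw [Finset.sum_const, Finset.card_univ, nsmul_eq_mul]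
    _ = ∑ w : κ, P w * T0 w := by
        rw [Finset.mul_sum]
        refine Finset.sum_congr rfl fun w _ => ?_
        calc (Fintype.card κ : ℂ) * (c0 * P w * T0 w)
            = ((Fintype.card κ : ℂ) * c0) * (P w * T0 w) := by ring
          _ = P w * T0 w := by rw [hcardinv, one_mul]
    _ = ∑ x : κ, dep i.val M (gg a x) (gg b x) := by
        refine Finset.sum_congr rfl fun w _ => (hRHSx w).symm

end Aux5

section Aux6
set_option linter.unusedSectionVars false

lemma posSemidef_real_smul {m : Type*} [Fintype m] {r : ℝ} (hr : 0 ≤ r)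
    {M : Matrix m m ℂ} (hM : M.PosSemidef) : (r • M).PosSemidef := by
  refine Matrix.PosSemidef.of_dotProduct_mulVec_nonneg ?_ ?_
  · ext x y
    rw [conjTranspose_apply, Matrix.smul_apply, star_smul, star_trivial,
      ← Matrix.conjTranspose_apply, hM.1, Matrix.smul_apply]
  · intro x
    rw [Matrix.smul_mulVec, dotProduct_smul, Complex.real_smul]
    exact mul_nonneg (by exact_mod_cast Complex.zero_le_real.mpr hr) (hM.dotProduct_mulVec_nonneg x)

lemma posSemidef_sum {m ι : Type*} [Fintype m] (s : Finset ι)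
    (F : ι → Matrix m m ℂ) (h : ∀ i ∈ s, (F i).PosSemidef) :
    (∑ i ∈ s, F i).PosSemidef := by
  classical
  induction s using Finset.induction_on with
  | empty => simpa using (Matrix.PosSemidef.zero : (0 : Matrix m m ℂ).PosSemidef)
  | @insert j s hj ih =>
    rw [Finset.sum_insert hj]
    exact (h j (Finset.mem_insert_self j s)).add
      (ih fun i hi => h i (Finset.mem_insert_of_mem hi))

lemma card_filter_powersetCard (n k : ℕ) (i : Fin n) (hk : 1 ≤ k) :
    ((Finset.powersetCard k (Finset.univ : Finset (Fin n))).filter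
      (fun I => i ∈ I)).card = (n - 1).choose (k - 1) := by
  have h1 : ((Finset.univ : Finset (Fin n)).erase i).card = n - 1 := by
    rw [Finset.card_erase_of_mem (Finset.mem_univ i), Finset.card_univ, Fintype.card_fin]
  rw [← h1, ← Finset.card_powersetCard]
  refine Finset.card_bij' (fun I _ => I.erase i) (fun J _ => insert i J) ?_ ?_ ?_ ?_
  · intro I hI
    simp only [Finset.mem_filter, Finset.mem_powersetCard] at hI
    obtain ⟨⟨hsub, hcard⟩, hmem⟩ := hI
    rw [Finset.mem_powersetCard]
    constructor
    · intro x hx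
      exact Finset.mem_erase.mpr ⟨(Finset.mem_erase.mp hx).1, Finset.mem_univ x⟩
    · rw [Finset.card_erase_of_mem hmem, hcard]
  · intro J hJ
    rw [Finset.mem_powersetCard] at hJ
    obtain ⟨hsub, hcard⟩ := hJ
    have hiJ : i ∉ J := fun hc => (Finset.mem_erase.mp (hsub hc)).1 rfl
    simp only [Finset.mem_filter, Finset.mem_powersetCard]
    refine ⟨⟨Finset.subset_univ _, ?_⟩, Finset.mem_insert_self i J⟩
    rw [Finset.card_insert_of_notMem hiJ, hcard]
    omega
  · intro I hI
    simp only [Finset.mem_filter] at hI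
    exact Finset.insert_erase hI.2
  · intro J hJ
    rw [Finset.mem_powersetCard] at hJ
    have hiJ : i ∉ J := fun hc => (Finset.mem_erase.mp (hJ.1 hc)).1 rfl
    exact Finset.erase_insert hiJ

lemma geo_sum_le (n : ℕ) : ∑ k ∈ Finset.Icc 1 n, (k : ℝ) * ((2:ℝ)^k)⁻¹ ≤ 2 := by
  have key : ∀ m : ℕ, ∑ k ∈ Finset.Icc 1 m, (k : ℝ) * ((2:ℝ)^k)⁻¹
      = 2 - ((m:ℝ)+2)/2^m := by
    intro m
    induction m with
    | zero => norm_num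
    | succ m ih =>
      rw [Finset.sum_Icc_succ_top (by omega : 1 ≤ m+1), ih]
      have h2 : (2:ℝ)^m ≠ 0 := by positivity
      push_cast
      field_simp
      ring
  rw [key]
  have h3 : (0:ℝ) ≤ ((n:ℝ)+2)/2^n := by positivity
  linarith

end Aux6

set_option linter.unusedSectionVars false in
lemma conj_entry_eq {m : Type*} [Fintype m] (U M : Matrix m m ℂ) (i : m) :
    (star U * M * U) i i = dotProduct (star (fun a => U a i)) (M *ᵥ (fun a => U a i)) := by
  simp only [Matrix.mul_apply, dotProduct, Matrix.mulVec, dotProduct,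
    Matrix.star_apply, Pi.star_apply, Finset.sum_mul, Finset.mul_sum]
  rw [Finset.sum_comm]
  refine Finset.sum_congr rfl fun a _ => Finset.sum_congr rfl fun b _ => by ring

section TNsqrt
open scoped MatrixOrder

lemma traceNorm_eq_sqrt {m : Type*} [Fintype m] [DecidableEq m] (A : Matrix m m ℂ) :
    traceNorm A = ((CFC.sqrt (Aᴴ * A)).trace).re := by
  have hA := Matrix.posSemidef_conjTranspose_mul_self A
  rw [CFC.sqrt_eq_cfc, cfc_nnreal_eq_real _ (Aᴴ * A) hA.nonneg, hA.1.cfc_eq]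
  have hf : (RCLike.ofReal ∘ (fun x : ℝ => ((NNReal.sqrt x.toNNReal : ℝ))) ∘ hA.1.eigenvalues
      : m → ℂ) = ((↑) : ℝ → ℂ) ∘ (√·) ∘ hA.1.eigenvalues := by
    funext i
    simp [Real.coe_sqrt, hA.eigenvalues_nonneg i]
  simp only [traceNorm, IsHermitian.cfc, Unitary.conjStarAlgAut_apply, Unitary.coe_star, hf]

end TNsqrt

open scoped MatrixOrder in
lemma traceNorm_sub_le {m : Type*} [Fintype m] [DecidableEq m]
    {P Q : Matrix m m ℂ} (hP : P.PosSemidef) (hQ : Q.PosSemidef) :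
    traceNorm (P - Q) ≤ (P.trace).re + (Q.trace).re := by
  set A := P - Q with hAdef
  have hA : A.IsHermitian := hP.1.sub hQ.1
  set U : Matrix m m ℂ := (hA.eigenvectorUnitary : Matrix m m ℂ) with hU
  have hUU : star U * U = 1 := Unitary.coe_star_mul_self hA.eigenvectorUnitary
  have hUU' : U * star U = 1 := Unitary.coe_mul_star_self hA.eigenvectorUnitary
  have habs : ∀ X : Matrix m m ℂ, star U * (U * X) = X := fun X => by
    rw [← Matrix.mul_assoc, hUU, Matrix.one_mul]
  set lam := hA.eigenvalues with hlam
  set dabs : Matrix m m ℂ := diagonal (fun i => ((|lam i| : ℝ) : ℂ)) with hdabs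
  set B : Matrix m m ℂ := U * dabs * star U with hB
  have hBpsd : B.PosSemidef := by
    have hd : dabs.PosSemidef := by
      refine Matrix.PosSemidef.diagonal fun i => ?_
      rw [Complex.le_def]
      simp [abs_nonneg]
    simpa [hB, Matrix.star_eq_conjTranspose] using hd.mul_mul_conjTranspose_same U
  have hconjmul : ∀ M N : Matrix m m ℂ,
      (U * M * star U) * (U * N * star U) = U * (M * N) * star U := by
    intro M N
    simp only [Matrix.mul_assoc]
    rw [show star U * (U * (N * star U)) = N * star U from habs _]
  have hsq : B ^ 2 = Aᴴ * A := by
    have hAA : Aᴴ * A = A * A := by rw [hA.eq]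
    have hspec := hA.spectral_theorem
    rw [hAA, pow_two, hB, hconjmul]
    conv_rhs => rw [hspec, Unitary.conjStarAlgAut_apply]
    rw [hconjmul]
    congr 2
    rw [hdabs, Matrix.diagonal_mul_diagonal, Matrix.diagonal_mul_diagonal]
    apply congrArg
    funext i
    simp only [Function.comp_apply]
    rw [← Complex.ofReal_mul, abs_mul_abs_self]
    norm_num
    rfl
  have hsqrt : CFC.sqrt (Aᴴ * A) = B :=
    CFC.sqrt_unique (by rw [← pow_two]; exact hsq) hBpsd.nonneg
  have htrB : B.trace = ∑ i, ((|lam i| : ℝ) : ℂ) := by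
    rw [hB, Matrix.trace_mul_cycle, hUU, Matrix.one_mul, hdabs, Matrix.trace_diagonal]
  have key : ∀ i, |lam i| ≤ ((star U * P * U) i i).re + ((star U * Q * U) i i).re := by
    intro i
    set v : m → ℂ := fun a => U a i with hv'
    have hveq : v = ⇑(hA.eigenvectorBasis i) := by
      funext a
      rw [hv', hU]
      exact Matrix.IsHermitian.eigenvectorUnitary_apply hA a i
    have hPi : (star U * P * U) i i = dotProduct (star v) (P *ᵥ v) := conj_entry_eq U P i
    have hQi : (star U * Q * U) i i = dotProduct (star v) (Q *ᵥ v) := conj_entry_eq U Q i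
    have hlameq : lam i
        = (dotProduct (star v) (P *ᵥ v)).re - (dotProduct (star v) (Q *ᵥ v)).re := by
      have h0 := hA.eigenvalues_eq i
      rw [hlam, h0, ← hveq, hAdef, Matrix.sub_mulVec, dotProduct_sub]
      simp
    have h1 : 0 ≤ (dotProduct (star v) (P *ᵥ v)).re := hP.re_dotProduct_nonneg v
    have h2 : 0 ≤ (dotProduct (star v) (Q *ᵥ v)).re := hQ.re_dotProduct_nonneg v
    rw [hPi, hQi, hlameq, abs_sub_le_iff]
    constructor <;> linarith
  have htr : ∀ M : Matrix m m ℂ, ∑ i, ((star U * M * U) i i).re = (M.trace).re := by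
    intro M
    have h1 : (star U * M * U).trace = M.trace := by
      rw [Matrix.trace_mul_cycle, hUU', Matrix.one_mul]
    rw [← h1]
    simp [Matrix.trace, Matrix.diag, Complex.re_sum]
  calc traceNorm A = (B.trace).re := by rw [traceNorm_eq_sqrt, hsqrt]
    _ = ∑ i, |lam i| := by rw [htrB, Complex.re_sum]; simp
    _ ≤ ∑ i, (((star U * P * U) i i).re + ((star U * Q * U) i i).re) :=
        Finset.sum_le_sum (fun i _ => key i)
    _ = (P.trace).re + (Q.trace).re := by rw [Finset.sum_add_distrib, htr, htr]


/-- The local variation distance is bounded by the normalised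
Wasserstein distance: `‖ρ − σ‖_{LV} ≤ (2/n)·‖ρ − σ‖_{W1}`. -/
theorem LV_le_W1
    {d : ℕ} {n : ℕ} (hn : 1 ≤ n)
    (ρ σ : Matrix (Fin n → Fin d) (Fin n → Fin d) ℂ)
    (hρ : IsState ρ) (hσ : IsState σ) :
    LV (ρ - σ) ≤ (2 / (n : ℝ)) * W1 (ρ - σ) := by
  classical
  rcases Nat.eq_zero_or_pos d with hd0 | hdpos
  · exfalso
    haveI : IsEmpty (Fin n → Fin d) :=
      ⟨fun f => by
        have := f ⟨0, hn⟩
        rw [hd0] at this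
        exact this.elim0⟩
    have h0 : ρ.trace = 0 := by simp [Matrix.trace]
    exact one_ne_zero (hρ.2.symm.trans h0)
  haveI : Nonempty (Fin d) := ⟨⟨0, hdpos⟩⟩
  have hnpos : (0:ℝ) < (n:ℝ) := by exact_mod_cast hn
  -- the defining set of the Wasserstein norm
  set S : Set ℝ := { w : ℝ |
    ∃ (c : Fin n → ℝ) (τ η : Fin n → Matrix (Fin n → Fin d) (Fin n → Fin d) ℂ),
      (∀ i, 0 ≤ c i) ∧ (∀ i, IsState (τ i)) ∧ (∀ i, IsState (η i)) ∧
      (∀ i, marginal (τ i) ({i}ᶜ : Finset (Fin n)) = marginal (η i) ({i}ᶜ : Finset (Fin n))) ∧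
      (ρ - σ) = ∑ i, c i • (τ i - η i) ∧ w = ∑ i, c i } with hSdef
  have hW1 : W1 (ρ - σ) = sInf S := rfl
  -- nonemptiness via the depolarization telescope
  have hSne : S.Nonempty := by
    refine ⟨2 * n, (fun _ => 2),
      (fun i => (2⁻¹ : ℝ) • (dep i.val ρ + dep (i.val+1) σ)),
      (fun i => (2⁻¹ : ℝ) • (dep (i.val+1) ρ + dep i.val σ)), ?_, ?_, ?_, ?_, ?_, ?_⟩
    · intro i; norm_num
    · intro i
      constructor
      · exact posSemidef_real_smul (by norm_num)
          ((dep_posSemidef _ hρ.1).add (dep_posSemidef _ hσ.1))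
      · rw [Matrix.trace_smul, Matrix.trace_add, dep_trace, dep_trace, hρ.2, hσ.2]
        rw [Complex.real_smul]
        norm_num
    · intro i
      constructor
      · exact posSemidef_real_smul (by norm_num)
          ((dep_posSemidef _ hρ.1).add (dep_posSemidef _ hσ.1))
      · rw [Matrix.trace_smul, Matrix.trace_add, dep_trace, dep_trace, hρ.2, hσ.2]
        rw [Complex.real_smul]
        norm_num
    · intro i
      rw [marginal_smul, marginal_smul, marginal_add, marginal_add,
        dep_marginal_succ i ρ, dep_marginal_succ i σ]
    · -- telescoping decomposition
      have hterm : ∀ i : Fin n,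
          (2:ℝ) • ((2⁻¹ : ℝ) • (dep i.val ρ + dep (i.val+1) σ)
            - (2⁻¹ : ℝ) • (dep (i.val+1) ρ + dep i.val σ))
          = (dep i.val ρ - dep i.val σ) - (dep (i.val+1) ρ - dep (i.val+1) σ) := by
        intro i
        rw [← smul_sub, smul_smul]
        norm_num
        abel
      simp only [hterm]
      rw [Fin.sum_univ_eq_sum_range
        (fun k => (dep k ρ - dep k σ) - (dep (k+1) ρ - dep (k+1) σ)) n]
      rw [Finset.sum_range_sub' (fun k => dep k ρ - dep k σ) n]
      rw [dep_zero, dep_zero]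
      rw [dep_full (le_refl n) (hρ.2.trans hσ.2.symm)]
      abel
    · rw [Finset.sum_const, Finset.card_univ, Fintype.card_fin, nsmul_eq_mul]
      ring
  -- the universal bound
  have hkey : ∀ w ∈ S, LV (ρ - σ) ≤ 2/(n:ℝ) * w := by
    rintro w ⟨c, τ, η, hc, hτ, hη, hmarg, hdecomp, hw⟩
    have hw0 : 0 ≤ w := hw ▸ Finset.sum_nonneg (fun i _ => hc i)
    have hA : ∀ (I : Finset (Fin n)),
        traceNorm (marginal (ρ - σ) I) ≤ ∑ i ∈ I, 2 * c i := by
      intro I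
      have hvanish : ∀ i ∈ (Finset.univ : Finset (Fin n)), i ∉ I →
          c i • (marginal (τ i) I - marginal (η i) I) = 0 := by
        intro i _ hiI
        rw [marginal_restrict (Finset.subset_compl_singleton.mpr hiI) (hmarg i)]
        rw [sub_self, smul_zero]
      have hmargX : marginal (ρ - σ) I
          = (∑ i ∈ I, c i • marginal (τ i) I) - (∑ i ∈ I, c i • marginal (η i) I) := by
        rw [hdecomp, marginal_sum]
        have h1 : ∀ i : Fin n, marginal (c i • (τ i - η i)) I
            = c i • (marginal (τ i) I - marginal (η i) I) := fun i => by
          rw [marginal_smul, marginal_sub]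
        simp only [h1]
        rw [← Finset.sum_subset (Finset.subset_univ I) hvanish]
        simp only [smul_sub]
        rw [Finset.sum_sub_distrib]
      rw [hmargX]
      have hP : (∑ i ∈ I, c i • marginal (τ i) I).PosSemidef :=
        posSemidef_sum _ _ (fun i _ => posSemidef_real_smul (hc i)
          (marginal_posSemidef (hτ i).1 I))
      have hQ : (∑ i ∈ I, c i • marginal (η i) I).PosSemidef :=
        posSemidef_sum _ _ (fun i _ => posSemidef_real_smul (hc i)
          (marginal_posSemidef (hη i).1 I))
      refine (traceNorm_sub_le hP hQ).trans ?_
      have htr : ∀ (θ : Fin n → Matrix (Fin n → Fin d) (Fin n → Fin d) ℂ),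
          (∀ i, IsState (θ i)) →
          ((∑ i ∈ I, c i • marginal (θ i) I).trace).re = ∑ i ∈ I, c i := by
        intro θ hθ
        rw [Matrix.trace_sum]
        have h2 : ∀ i ∈ I, (c i • marginal (θ i) I).trace = ((c i : ℝ) : ℂ) := by
          intro i _
          rw [Matrix.trace_smul, marginal_trace, (hθ i).2]
          simp [Complex.real_smul]
        rw [Finset.sum_congr rfl h2, Complex.re_sum]
        simp
      rw [htr τ hτ, htr η hη]
      rw [← Finset.sum_add_distrib]
      refine le_of_eq (Finset.sum_congr rfl fun i _ => by ring)
    have hB : ∀ k ∈ Finset.Icc 1 n,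
        ((2:ℝ)^k)⁻¹ * (((n.choose k : ℝ))⁻¹ *
          ∑ I ∈ Finset.powersetCard k (Finset.univ : Finset (Fin n)),
            traceNorm (marginal (ρ - σ) I))
        ≤ ((2:ℝ)^k)⁻¹ * ((k:ℝ)/(n:ℝ) * (2 * w)) := by
      intro k hk
      rcases Finset.mem_Icc.mp hk with ⟨hk1, hkn⟩
      refine mul_le_mul_of_nonneg_left ?_ (by positivity)
      have hsum1 : ∑ I ∈ Finset.powersetCard k (Finset.univ : Finset (Fin n)),
          traceNorm (marginal (ρ - σ) I)
          ≤ ∑ I ∈ Finset.powersetCard k (Finset.univ : Finset (Fin n)), ∑ i ∈ I, 2 * c i :=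
        Finset.sum_le_sum (fun I _ => hA I)
      have hcount : ∑ I ∈ Finset.powersetCard k (Finset.univ : Finset (Fin n)),
          ∑ i ∈ I, 2 * c i = ((n-1).choose (k-1) : ℝ) * (2 * w) := by
        have step1 : ∀ I ∈ Finset.powersetCard k (Finset.univ : Finset (Fin n)),
            ∑ i ∈ I, 2 * c i = ∑ i : Fin n, if i ∈ I then 2 * c i else 0 := by
          intro I _
          rw [Finset.sum_ite_mem, Finset.univ_inter]
        rw [Finset.sum_congr rfl step1, Finset.sum_comm]
        have step2 : ∀ i : Fin n,
            (∑ I ∈ Finset.powersetCard k (Finset.univ : Finset (Fin n)),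
              if i ∈ I then 2 * c i else 0) = ((n-1).choose (k-1) : ℝ) * (2 * c i) := by
          intro i
          rw [Finset.sum_ite, Finset.sum_const_zero, add_zero, Finset.sum_const]
          rw [card_filter_powersetCard n k i hk1, nsmul_eq_mul]
        rw [Finset.sum_congr rfl (fun i _ => step2 i), hw, Finset.mul_sum, Finset.mul_sum]
      have hchoosepos : 0 < n.choose k := Nat.choose_pos hkn
      have hid : k * n.choose k = n * (n-1).choose (k-1) := by
        have h3 := Nat.add_one_mul_choose_eq (n-1) (k-1)
        rw [Nat.sub_add_cancel hn,
          Nat.sub_add_cancel hk1] at h3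
        rw [h3]
        exact Nat.mul_comm k (n.choose k)
      calc ((n.choose k : ℝ))⁻¹ * ∑ I ∈ Finset.powersetCard k (Finset.univ : Finset (Fin n)),
            traceNorm (marginal (ρ - σ) I)
          ≤ ((n.choose k : ℝ))⁻¹ * (((n-1).choose (k-1) : ℝ) * (2 * w)) := by
            refine mul_le_mul_of_nonneg_left (hsum1.trans_eq hcount) (by positivity)
        _ = (k:ℝ)/(n:ℝ) * (2 * w) := by
            have hck : (0:ℝ) < (n.choose k : ℝ) := by exact_mod_cast hchoosepos
            have hid' : (k:ℝ) * (n.choose k : ℝ) = (n:ℝ) * ((n-1).choose (k-1) : ℝ) := by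
              exact_mod_cast hid
            field_simp
            nlinarith [hid']
    rw [LV]
    calc (1/2) * ∑ k ∈ Finset.Icc 1 n, ((2:ℝ)^k)⁻¹ *
          (((n.choose k : ℝ))⁻¹ *
            ∑ I ∈ Finset.powersetCard k (Finset.univ : Finset (Fin n)),
              traceNorm (marginal (ρ - σ) I))
        ≤ (1/2) * ∑ k ∈ Finset.Icc 1 n, ((2:ℝ)^k)⁻¹ * ((k:ℝ)/(n:ℝ) * (2 * w)) := by
          refine mul_le_mul_of_nonneg_left (Finset.sum_le_sum hB) (by norm_num)
      _ = (w/(n:ℝ)) * ∑ k ∈ Finset.Icc 1 n, (k:ℝ) * ((2:ℝ)^k)⁻¹ := by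
          rw [Finset.mul_sum, Finset.mul_sum]
          refine Finset.sum_congr rfl fun k _ => by ring
      _ ≤ (w/(n:ℝ)) * 2 := by
          refine mul_le_mul_of_nonneg_left (geo_sum_le n) (by positivity)
      _ = 2/(n:ℝ) * w := by ring
  -- conclude
  have h1 : (n:ℝ)/2 * LV (ρ - σ) ≤ sInf S := by
    refine le_csInf hSne (fun w hw => ?_)
    have h2 := hkey w hw
    have h3 : (n:ℝ)/2 * LV (ρ - σ) ≤ (n:ℝ)/2 * (2/(n:ℝ) * w) :=
      mul_le_mul_of_nonneg_left h2 (by positivity)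
    have h4 : (n:ℝ)/2 * (2/(n:ℝ) * w) = w := by
      field_simp
    linarith
  calc LV (ρ - σ) = 2/(n:ℝ) * ((n:ℝ)/2 * LV (ρ - σ)) := by
        field_simp
    _ ≤ 2/(n:ℝ) * sInf S := by
        refine mul_le_mul_of_nonneg_left h1 (by positivity)
    _ = 2/(n:ℝ) * W1 (ρ - σ) := by rw [hW1]


end AlmostIID
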